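/- Let K ≥ 2 be a natural number. Then (1/p) · ( Σ_{m=2}^{K} (p^{m−1} − p^K)/(K − m + 1) + p² ) tends to 1/(K − 1) as p → 0⁺. -/

import Mathlib

open Finset Filter Topology

/-- Small-outage scaling of the residue term in **Theorem 1**:
`(1/p)·(Σ_{m=2}^{K} (p^{m−1} − p^K)/(K − m + 1) + p²) → 1/(K − 1)` as `p → 0⁺`,
i.e. the residue `R_es` scales as `O(P_out)` for small outage probability `P_out = p`. -/
theorem residue_term_small_outage_scaling (K : ℕ) (hK : 2 ≤ K) :
    Tendsto
      (fun p : ℝ => (1 / p) *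
        ((∑ m ∈ Finset.Icc 2 K, (p ^ (m - 1) - p ^ K) / ((K : ℝ) - (m : ℝ) + 1)) + p ^ 2))
      (nhdsWithin 0 (Set.Ioi 0)) (nhds (1 / ((K : ℝ) - 1))) := by
  set g : ℝ → ℝ := fun p =>
    (∑ m ∈ Finset.Icc 2 K, (p ^ (m - 2) - p ^ (K - 1)) / ((K : ℝ) - (m : ℝ) + 1)) + p
  have hg0 : g 0 = 1 / ((K : ℝ) - 1) := by
    simp only [g]
    rw [Finset.sum_eq_single 2]
    · have : (0:ℝ) ^ (K - 1) = 0 := by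
        apply zero_pow
        omega
      simp [this]
      ring
    · intro m hm hm2
      have h2 : 2 ≤ m := (Finset.mem_Icc.mp hm).1
      have : (0:ℝ) ^ (m - 2) = 0 := by
        apply zero_pow
        omega
      rw [this]
      have : (0:ℝ) ^ (K - 1) = 0 := by
        apply zero_pow
        omega
      simp [this]
    · intro h
      exact absurd (Finset.mem_Icc.mpr ⟨le_refl 2, hK⟩) h
  have hgc : Continuous g := by
    apply Continuous.add _ continuous_id
    apply continuous_finset_sum
    intro m hm
    exact ((continuous_pow _).sub (continuous_pow _)).div_const _
  have hgt : Tendsto g (nhdsWithin 0 (Set.Ioi 0)) (nhds (1 / ((K : ℝ) - 1))) := by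
    rw [← hg0]
    exact (hgc.tendsto 0).mono_left nhdsWithin_le_nhds
  apply hgt.congr'
  filter_upwards [self_mem_nhdsWithin] with p hp
  have hp0 : p ≠ 0 := ne_of_gt hp
  simp only [g]
  rw [mul_add, Finset.mul_sum]
  congr 1
  · apply Finset.sum_congr rfl
    intro m hm
    have h2 : 2 ≤ m := (Finset.mem_Icc.mp hm).1
    have hK1 : K = (K - 1) + 1 := by omega
    have hm1 : m - 1 = (m - 2) + 1 := by omega
    have hmK : m ≤ K := (Finset.mem_Icc.mp hm).2
    have hden : (K : ℝ) - (m : ℝ) + 1 ≠ 0 := by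
      have : (m : ℝ) ≤ (K : ℝ) := by exact_mod_cast hmK
      nlinarith
    rw [hK1, hm1, pow_succ, pow_succ]
    field_simp
    ring_nf
    rw [show 1 + (K - 1) - 1 = K - 1 by omega]
  · field_simp
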